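/- Let A(s) be the 3×3 real matrix with rows (cos s, 0, sin s), (sin s, 0, -cos s), (0, 1, 0). Let P4(s) denote the first column of A(s)⁴ and P0 = (1,0,0). Then lim_{s→0} (P4(s) - P0)/s³ = (0, 1/2, -1/2). -/

import Mathlib

open Real Matrix Filter

lemma aux_sin_div : Tendsto (fun s : ℝ => Real.sin s / s)
    (nhdsWithin 0 {s : ℝ | s ≠ 0}) (nhds 1) := by
  have h := hasDerivAt_sin 0
  rw [hasDerivAt_iff_tendsto_slope] at h
  have heq : (fun s : ℝ => Real.sin s / s) = slope Real.sin 0 := by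
    funext s; simp [slope_def_field]
  rw [heq]
  rw [Real.cos_zero] at h
  exact h

lemma aux_cos_div : Tendsto (fun s : ℝ => (Real.cos s - 1) / s)
    (nhdsWithin 0 {s : ℝ | s ≠ 0}) (nhds 0) := by
  have h := hasDerivAt_cos 0
  rw [hasDerivAt_iff_tendsto_slope] at h
  have heq : (fun s : ℝ => (Real.cos s - 1) / s) = slope Real.cos 0 := by
    funext s; simp [slope_def_field]
  rw [heq]
  rw [Real.sin_zero, neg_zero] at h
  exact h

lemma aux_half : Tendsto (fun s : ℝ => s / 2)
    (nhdsWithin 0 {s : ℝ | s ≠ 0}) (nhdsWithin 0 {s : ℝ | s ≠ 0}) := by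
  refine tendsto_nhdsWithin_of_tendsto_nhds_of_eventually_within _ ?_ ?_
  · have h : Tendsto (fun s : ℝ => s / 2) (nhds 0) (nhds 0) := by
      simpa using (continuous_id.div_const (2:ℝ)).tendsto 0
    exact h.mono_left nhdsWithin_le_nhds
  · filter_upwards [self_mem_nhdsWithin] with s hs
    exact fun h => hs (by simpa using (by linarith : s = 0))

lemma aux_cos_div_sq : Tendsto (fun s : ℝ => (Real.cos s - 1) / s ^ 2)
    (nhdsWithin 0 {s : ℝ | s ≠ 0}) (nhds (-(1/2))) := by
  have h : Tendsto (fun s : ℝ => Real.sin (s / 2) / (s / 2))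
      (nhdsWithin 0 {s : ℝ | s ≠ 0}) (nhds 1) := aux_sin_div.comp aux_half
  have h2 : Tendsto (fun s : ℝ =>
      -(1/2) * ((Real.sin (s/2) / (s/2)) * (Real.sin (s/2) / (s/2))))
      (nhdsWithin 0 {s : ℝ | s ≠ 0}) (nhds (-(1/2) * (1 * 1))) :=
    tendsto_const_nhds.mul (h.mul h)
  rw [show (-(1/2) : ℝ) * (1 * 1) = -(1/2) by ring] at h2
  refine h2.congr' ?_
  filter_upwards [self_mem_nhdsWithin] with s hs
  have hs' : s ≠ 0 := hs
  have hc : Real.cos s = 1 - 2 * Real.sin (s/2) ^ 2 := by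
    have h1 := Real.cos_sq' (s/2)
    have h2 : Real.cos (2 * (s/2)) = 2 * Real.cos (s/2) ^ 2 - 1 := Real.cos_two_mul _
    rw [show 2 * (s/2) = s by ring] at h2
    rw [h2, h1]; ring
  rw [hc]
  field_simp
  ring

/-- On the unit sphere, the gap `P₄(s) - P₀` of the geodesic quadrilateral, divided by
`s³`, tends to `(0, 1/2, -1/2) = (1/2)(u - v)` as `s → 0`. -/
theorem sphere_quadrilateral_gap_P4 :
    Tendsto
      (fun s : ℝ =>
        (s ^ 3)⁻¹ •
          ((fun i => ((!![Real.cos s, 0, Real.sin s;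
              Real.sin s, 0, -Real.cos s;
              0, 1, 0] : Matrix (Fin 3) (Fin 3) ℝ) ^ 4) i 0)
            - ![1, 0, 0]))
      (nhdsWithin 0 {s : ℝ | s ≠ 0})
      (nhds ![0, 1/2, -1/2]) := by
  rw [tendsto_pi_nhds]
  intro i
  fin_cases i
  · -- x component → 0
    have h : Tendsto (fun s : ℝ =>
        (((Real.cos s - 1) / s) * ((Real.cos s - 1) / s) * ((Real.cos s - 1) / s))
          * (Real.cos s + 1))
        (nhdsWithin 0 {s : ℝ | s ≠ 0}) (nhds ((0 * 0 * 0) * (Real.cos 0 + 1))) := by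
      refine ((aux_cos_div.mul aux_cos_div).mul aux_cos_div).mul ?_
      exact ((Real.continuous_cos.add continuous_const).tendsto 0).mono_left nhdsWithin_le_nhds
    rw [show ((0:ℝ) * 0 * 0) * (Real.cos 0 + 1) = 0 by simp] at h
    refine h.congr' ?_
    filter_upwards [self_mem_nhdsWithin] with s hs
    have hs' : s ≠ 0 := hs
    simp only [Pi.smul_apply, Pi.sub_apply, smul_eq_mul, pow_succ, pow_zero, Matrix.one_mul,
      Matrix.mul_apply, Fin.sum_univ_three, Matrix.cons_val_zero, Matrix.cons_val_one,
      Matrix.head_cons, Matrix.cons_val', Matrix.empty_val', Matrix.cons_val_fin_one,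
      Matrix.head_fin_const, Matrix.of_apply, Fin.zero_eta, Fin.mk_one, Fin.reduceFinMk,
      Matrix.cons_val]
    field_simp
    linear_combination (-2 * Real.cos s) * Real.sin_sq_add_cos_sq s
  · -- y component → 1/2
    have h : Tendsto (fun s : ℝ =>
        (Real.sin s / s) * ((Real.cos s - 1) / s ^ 2)
          * (Real.cos s ^ 2 - Real.cos s - 1))
        (nhdsWithin 0 {s : ℝ | s ≠ 0})
        (nhds (1 * (-(1/2)) * (Real.cos 0 ^ 2 - Real.cos 0 - 1))) := by
      refine (aux_sin_div.mul aux_cos_div_sq).mul ?_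
      exact ((((Real.continuous_cos.pow 2).sub Real.continuous_cos).sub
        continuous_const).tendsto 0).mono_left nhdsWithin_le_nhds
    rw [show (1:ℝ) * (-(1/2)) * (Real.cos 0 ^ 2 - Real.cos 0 - 1) = 1/2 by
      rw [Real.cos_zero]; norm_num] at h
    refine h.congr' ?_
    filter_upwards [self_mem_nhdsWithin] with s hs
    have hs' : s ≠ 0 := hs
    simp only [Pi.smul_apply, Pi.sub_apply, smul_eq_mul, pow_succ, pow_zero, Matrix.one_mul,
      Matrix.mul_apply, Fin.sum_univ_three, Matrix.cons_val_zero, Matrix.cons_val_one,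
      Matrix.head_cons, Matrix.cons_val', Matrix.empty_val', Matrix.cons_val_fin_one,
      Matrix.head_fin_const, Matrix.of_apply, Fin.zero_eta, Fin.mk_one, Fin.reduceFinMk,
      Matrix.cons_val]
    field_simp
    linear_combination (-(Real.sin s)) * Real.sin_sq_add_cos_sq s
  · -- z component → -1/2
    have h : Tendsto (fun s : ℝ =>
        (Real.sin s / s) * ((Real.cos s - 1) / s ^ 2) * Real.cos s)
        (nhdsWithin 0 {s : ℝ | s ≠ 0})
        (nhds (1 * (-(1/2)) * Real.cos 0)) := by
      refine (aux_sin_div.mul aux_cos_div_sq).mul ?_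
      exact (Real.continuous_cos.tendsto 0).mono_left nhdsWithin_le_nhds
    rw [show (1:ℝ) * (-(1/2)) * Real.cos 0 = -(1/2) by rw [Real.cos_zero]; ring] at h
    have hval : (![0, 1/2, -1/2] : Fin 3 → ℝ) 2 = -(1/2) := by simp [Matrix.cons_val]; norm_num
    refine Tendsto.congr' ?_ (hval ▸ h)
    filter_upwards [self_mem_nhdsWithin] with s hs
    have hs' : s ≠ 0 := hs
    simp only [Pi.smul_apply, Pi.sub_apply, smul_eq_mul, pow_succ, pow_zero, Matrix.one_mul,
      Matrix.mul_apply, Fin.sum_univ_three, Matrix.cons_val_zero, Matrix.cons_val_one,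
      Matrix.head_cons, Matrix.cons_val', Matrix.empty_val', Matrix.cons_val_fin_one,
      Matrix.head_fin_const, Matrix.of_apply, Fin.zero_eta, Fin.mk_one, Fin.reduceFinMk,
      Matrix.cons_val]
    field_simp
    ring
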